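/- For all λ > 0, the graph of f(x,y) = 1 + λ(x+y²)/√(1+(x+y²)²) has no umbilical points; that is, the system (1+f₁²)f₁₂ − f₁f₂f₁₁ = 0 and (1+f₁²)f₂₂ − (1+f₂²)f₁₁ = 0 has no simultaneous solution (x,y) ∈ ℝ². -/

import Mathlib

noncomputable def sf (t : ℝ) : ℝ := Real.sqrt (1 + t ^ 2)

lemma sf_pos (t : ℝ) : 0 < sf t := Real.sqrt_pos.2 (by positivity)

lemma sf_sq (t : ℝ) : sf t ^ 2 = 1 + t ^ 2 := Real.sq_sqrt (by positivity)

lemma hasDerivAt_sf (t : ℝ) : HasDerivAt sf (t / sf t) t := by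
  have h1 : HasDerivAt (fun t : ℝ => 1 + t ^ 2) (2 * t) t := by
    simpa using (hasDerivAt_pow 2 t).const_add 1
  have h2 := (Real.hasDerivAt_sqrt (by positivity : (1:ℝ) + t ^ 2 ≠ 0)).comp t h1
  refine HasDerivAt.congr_deriv h2 ?_
  have h0 := (sf_pos t).ne'
  rw [show Real.sqrt (1 + t ^ 2) = sf t from rfl]
  field_simp

lemma hasDerivAt_g (l t : ℝ) :
    HasDerivAt (fun t => 1 + l * t / sf t) (l / sf t ^ 3) t := by
  have h := (((hasDerivAt_id t).const_mul l).div (hasDerivAt_sf t) (sf_pos t).ne').const_add 1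
  refine HasDerivAt.congr_deriv h ?_
  have hs := sf_sq t
  have h0 := (sf_pos t).ne'
  field_simp
  simp only [id]
  linear_combination l * hs

lemma hasDerivAt_g' (l t : ℝ) :
    HasDerivAt (fun t => l / sf t ^ 3) (-(3 * l * t) / sf t ^ 5) t := by
  have h := (hasDerivAt_const t l).div ((hasDerivAt_sf t).pow 3) (pow_ne_zero 3 (sf_pos t).ne')
  refine HasDerivAt.congr_deriv h ?_
  have h0 := (sf_pos t).ne'
  simp only [Pi.pow_apply]
  field_simp
  ring

theorem bounded_graph_umbilic_free (l : ℝ) (hl : 0 < l) :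
    ¬ ∃ p : ℝ × ℝ,
      ((fun f : ℝ × ℝ → ℝ =>
        (1 + (fderiv ℝ f p (1, 0)) ^ 2) * fderiv ℝ (fun q => fderiv ℝ f q (0, 1)) p (1, 0)
          - fderiv ℝ f p (1, 0) * fderiv ℝ f p (0, 1) *
              fderiv ℝ (fun q => fderiv ℝ f q (1, 0)) p (1, 0) = 0 ∧
        (1 + (fderiv ℝ f p (1, 0)) ^ 2) * fderiv ℝ (fun q => fderiv ℝ f q (0, 1)) p (0, 1)
          - (1 + (fderiv ℝ f p (0, 1)) ^ 2) *
              fderiv ℝ (fun q => fderiv ℝ f q (1, 0)) p (1, 0) = 0)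
        (fun w : ℝ × ℝ =>
          1 + l * (w.1 + w.2 ^ 2) / Real.sqrt (1 + (w.1 + w.2 ^ 2) ^ 2))) := by
  rintro ⟨p, h1, h2⟩
  set f : ℝ × ℝ → ℝ := fun w =>
      1 + l * (w.1 + w.2 ^ 2) / Real.sqrt (1 + (w.1 + w.2 ^ 2) ^ 2) with hf_def
  set u : ℝ × ℝ → ℝ := fun w => w.1 + w.2 ^ 2 with hu_def
  -- derivative of u
  have hU : ∀ q : ℝ × ℝ, HasFDerivAt u
      (ContinuousLinearMap.fst ℝ ℝ ℝ + (2 * q.2) • ContinuousLinearMap.snd ℝ ℝ ℝ) q := by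
    intro q
    have hsq : HasFDerivAt (fun w : ℝ × ℝ => w.2 ^ 2)
        ((2 * q.2) • ContinuousLinearMap.snd ℝ ℝ ℝ) q := by
      have h := (hasFDerivAt_snd (p := q) (𝕜 := ℝ) (E := ℝ) (F := ℝ)).mul
        (hasFDerivAt_snd (p := q) (𝕜 := ℝ) (E := ℝ) (F := ℝ))
      have hfun : (fun w : ℝ × ℝ => w.2 ^ 2) = fun w : ℝ × ℝ => w.2 * w.2 := by
        funext w; ring
      rw [hfun, two_mul, add_smul]
      exact h
    exact (hasFDerivAt_fst (p := q) (𝕜 := ℝ) (E := ℝ) (F := ℝ)).add hsq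
  -- first derivative of f
  have hf : ∀ q : ℝ × ℝ, HasFDerivAt f
      ((l / sf (u q) ^ 3) •
        (ContinuousLinearMap.fst ℝ ℝ ℝ + (2 * q.2) • ContinuousLinearMap.snd ℝ ℝ ℝ)) q := by
    intro q
    exact (hasDerivAt_g l (u q)).comp_hasFDerivAt q (hU q)
  set t := u p with ht_def
  have e1 : fderiv ℝ f p (1, 0) = l / sf t ^ 3 := by
    rw [(hf p).fderiv]; simp [ht_def]
  have e2 : fderiv ℝ f p (0, 1) = l / sf t ^ 3 * (2 * p.2) := by
    rw [(hf p).fderiv]; simp [ht_def]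
  have F1 : (fun q => fderiv ℝ f q (1, 0)) = fun q => l / sf (u q) ^ 3 := by
    funext q; rw [(hf q).fderiv]; simp
  have F2 : (fun q => fderiv ℝ f q (0, 1)) = fun q => (l / sf (u q) ^ 3) * (2 * q.2) := by
    funext q; rw [(hf q).fderiv]; simp
  have hA : ∀ q : ℝ × ℝ, HasFDerivAt (fun q => l / sf (u q) ^ 3)
      ((-(3 * l * u q) / sf (u q) ^ 5) •
        (ContinuousLinearMap.fst ℝ ℝ ℝ + (2 * q.2) • ContinuousLinearMap.snd ℝ ℝ ℝ)) q := by
    intro q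
    exact (hasDerivAt_g' l (u q)).comp_hasFDerivAt q (hU q)
  have hB : ∀ q : ℝ × ℝ, HasFDerivAt (fun q : ℝ × ℝ => 2 * q.2)
      ((2 : ℝ) • ContinuousLinearMap.snd ℝ ℝ ℝ) q := fun q =>
    (hasFDerivAt_snd (p := q) (𝕜 := ℝ) (E := ℝ) (F := ℝ)).const_mul 2
  have hM : ∀ q : ℝ × ℝ, HasFDerivAt (fun q => (l / sf (u q) ^ 3) * (2 * q.2))
      ((l / sf (u q) ^ 3) • ((2 : ℝ) • ContinuousLinearMap.snd ℝ ℝ ℝ) +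
        (2 * q.2) • ((-(3 * l * u q) / sf (u q) ^ 5) •
          (ContinuousLinearMap.fst ℝ ℝ ℝ + (2 * q.2) • ContinuousLinearMap.snd ℝ ℝ ℝ))) q :=
    fun q => (hA q).mul (hB q)
  have e11 : fderiv ℝ (fun q => fderiv ℝ f q (1, 0)) p (1, 0) = -(3 * l * t) / sf t ^ 5 := by
    rw [F1, (hA p).fderiv]; simp [ht_def]
  have e12 : fderiv ℝ (fun q => fderiv ℝ f q (0, 1)) p (1, 0) =
      2 * p.2 * (-(3 * l * t) / sf t ^ 5) := by
    rw [F2, (hM p).fderiv]; simp [ht_def]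
  have e22 : fderiv ℝ (fun q => fderiv ℝ f q (0, 1)) p (0, 1) =
      l / sf t ^ 3 * 2 + 2 * p.2 * (-(3 * l * t) / sf t ^ 5 * (2 * p.2)) := by
    rw [F2, (hM p).fderiv]; simp [ht_def]
  rw [e1, e2, e12, e11] at h1
  rw [e1, e2, e22, e11] at h2
  set A := l / sf t ^ 3 with hA_def
  set C := -(3 * l * t) / sf t ^ 5 with hC_def
  have hApos : 0 < A := div_pos hl (pow_pos (sf_pos t) 3)
  have h1' : (1 + A ^ 2) * (2 * p.2 * C) - A * (A * (2 * p.2)) * C = 0 := h1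
  clear hf hU hA hB hM F1 F2 e1 e2 e11 e12 e22 h1 hf_def hu_def ht_def
  clear_value t A C
  -- h1 reduces to 2 p.2 * C = 0
  have hyC : p.2 * C = 0 := by linear_combination h1' / 2
  rcases mul_eq_zero.1 hyC with hy | hC
  · -- p.2 = 0 : second equation gives 2A(1+A²) = C, impossible
    rw [hy] at h2
    have hs := sf_sq t
    have h0 := (sf_pos t).ne'
    have hC0 : (1 + A ^ 2) * (A * 2) - C = 0 := by linear_combination h2
    rw [hA_def, hC_def] at hC0
    have h3 : sf t ^ 3 = sf t * (1 + t ^ 2) := by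
      rw [show sf t ^ 3 = sf t * sf t ^ 2 from by ring, hs]
    have h5 : sf t ^ 5 = sf t * (1 + t ^ 2) ^ 2 := by
      rw [show sf t ^ 5 = sf t * (sf t ^ 2) ^ 2 from by ring, hs]
    rw [h3, h5] at hC0
    have h1q : (0:ℝ) < 1 + t ^ 2 := by positivity
    field_simp at hC0
    have hq : (0:ℝ) < 2 * (1 + t ^ 2) + 3 * t := by nlinarith [sq_nonneg (4 * t + 3)]
    have hP : (0:ℝ) < 2 * (1 + t ^ 2) ^ 3 + 3 * t * (1 + t ^ 2) ^ 2 + 2 * l ^ 2 := by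
      nlinarith [mul_pos (mul_pos h1q h1q) hq, sq_nonneg l]
    have hC0' : sf t * (l * (1 + t ^ 2) ^ 2 *
        (2 * (1 + t ^ 2) ^ 3 + 3 * t * (1 + t ^ 2) ^ 2 + 2 * l ^ 2)) = 0 := by
      linear_combination sf t * (1 + t ^ 2) ^ 2 * hC0 - (sf t * l * (1 + t ^ 2) ^ 2 *
        (2 * (1 + t ^ 2) ^ 2 + 3 * t * (1 + t ^ 2))) * hs
    nlinarith [hC0', mul_pos (mul_pos (mul_pos (sf_pos t) hl) (pow_pos h1q 2)) hP]
  · -- C = 0 : second equation gives 2A(1+A²) = 0, impossible since A > 0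
    rw [hC] at h2
    nlinarith [hApos, sq_nonneg A, mul_pos hApos (mul_pos hApos hApos)]
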